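/- Let M be a Maya diagram with block coordinates (β₀,...,β_{2g}). Then applying the flips φ_{β₀}, φ_{β₁}, ..., φ_{β_{2g}} (in any order) to M yields M + 1. In particular every Maya diagram of genus g is (2g+1, 1)-cyclic. -/

import Mathlib

open Classical in
/-- The flip at site `m`: toggle membership of `m` in `M`. -/
noncomputable def mayaFlip (m : ℤ) (M : Set ℤ) : Set ℤ :=
  if m ∈ M then M \ {m} else M ∪ {m}

/-- Composition of flips along a list of sites. -/
noncomputable def flipList (l : List ℤ) (M : Set ℤ) : Set ℤ :=
  l.foldr mayaFlip M

/-- `Ξ(β) = (-∞,β₀) ∪ [β₁,β₂) ∪ ... ∪ [β_{2g-1},β_{2g})`. -/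
def XiBlocks (g : ℕ) (β : Fin (2 * g + 1) → ℤ) : Set ℤ :=
  Set.Iio (β ⟨0, by omega⟩) ∪
    ⋃ i : Fin g, Set.Ico (β ⟨2 * (i : ℕ) + 1, by have := i.isLt; omega⟩)
      (β ⟨2 * (i : ℕ) + 2, by have := i.isLt; omega⟩)

/-- `M + k = {m + k : m ∈ M}`. -/
def shiftSet (M : Set ℤ) (k : ℤ) : Set ℤ := (· + k) '' M

/-- `M` is `(p,k)`-cyclic: some composition of `p` flips maps `M` to `M + k`. -/
def MayaCyclic (M : Set ℤ) (p : ℕ) (k : ℤ) : Prop :=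
  ∃ μ : List ℤ, μ.length = p ∧ flipList μ M = shiftSet M k

lemma mem_mayaFlip {x a : ℤ} {S : Set ℤ} : x ∈ mayaFlip a S ↔ Xor' (x ∈ S) (x = a) := by
  by_cases hx : x = a
  · subst hx
    unfold mayaFlip; split_ifs with h <;> simp [Xor', h]
  · unfold mayaFlip; split_ifs with h <;> simp [Xor', Xor, hx]

lemma mem_flipList {x : ℤ} {M : Set ℤ} : ∀ {l : List ℤ}, l.Nodup →
    (x ∈ flipList l M ↔ Xor' (x ∈ M) (x ∈ l))
  | [], _ => by simp [flipList, Xor', Xor]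
  | a :: l, h => by
    have hal : a ∉ l := (List.nodup_cons.mp h).1
    have ih := mem_flipList (x := x) (M := M) (List.nodup_cons.mp h).2
    show x ∈ mayaFlip a (flipList l M) ↔ _
    rw [mem_mayaFlip, ih]
    by_cases hx : x = a
    · subst hx; simp [Xor', Xor, hal]
    · simp [Xor', Xor, hx]

lemma xi_shift {g : ℕ} {β : Fin (2 * g + 1) → ℤ} (hβ : StrictMono β) (x : ℤ) :
    x - 1 ∈ XiBlocks g β ↔ Xor' (x ∈ XiBlocks g β) (∃ i, β i = x) := by
  have hmem : ∀ y : ℤ, y ∈ XiBlocks g β ↔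
      y < β ⟨0, by omega⟩ ∨ ∃ i : Fin g,
        β ⟨2 * (i : ℕ) + 1, by have := i.isLt; omega⟩ ≤ y ∧
        y < β ⟨2 * (i : ℕ) + 2, by have := i.isLt; omega⟩ := by
    intro y
    simp [XiBlocks, Set.mem_union, Set.mem_iUnion, Set.mem_Ico, Set.mem_Iio]
  by_cases h : ∃ j, β j = x
  · obtain ⟨j, rfl⟩ := h
    have hA : β j ∈ XiBlocks g β ↔ Odd (j : ℕ) := by
      rw [hmem]
      constructor
      · rintro (h0 | ⟨l, h1, h2⟩)
        · have := Fin.lt_def.mp (hβ.lt_iff_lt.mp h0)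
          simp at this
        · have e1 : 2 * (l : ℕ) + 1 ≤ (j : ℕ) := Fin.le_def.mp (hβ.le_iff_le.mp h1)
          have e2 : (j : ℕ) < 2 * (l : ℕ) + 2 := Fin.lt_def.mp (hβ.lt_iff_lt.mp h2)
          exact ⟨l, by omega⟩
      · rintro ⟨k, hk⟩
        have hkg : k < g := by have := j.isLt; omega
        refine Or.inr ⟨⟨k, hkg⟩, ?_, ?_⟩
        · exact le_of_eq (congrArg β (Fin.ext (by simp; omega)))
        · exact hβ (Fin.lt_def.mpr (by simp; omega))
    have hB : β j - 1 ∈ XiBlocks g β ↔ Even (j : ℕ) := by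
      rw [hmem]
      constructor
      · rintro (h0 | ⟨l, h1, h2⟩)
        · have hle : β j ≤ β ⟨0, by omega⟩ := by omega
          have hj0 : (j : ℕ) ≤ 0 := Fin.le_def.mp (hβ.le_iff_le.mp hle)
          exact ⟨0, by omega⟩
        · have e1 : 2 * (l : ℕ) + 1 < (j : ℕ) :=
            Fin.lt_def.mp (hβ.lt_iff_lt.mp (by omega : β ⟨2 * (l : ℕ) + 1, by have := l.isLt; omega⟩ < β j))
          have e2 : (j : ℕ) ≤ 2 * (l : ℕ) + 2 :=
            Fin.le_def.mp (hβ.le_iff_le.mp (by omega : β j ≤ β ⟨2 * (l : ℕ) + 2, by have := l.isLt; omega⟩))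
          exact ⟨(l : ℕ) + 1, by omega⟩
      · intro he
        rcases Nat.eq_zero_or_pos (j : ℕ) with h0 | hpos
        · left
          have : β j = β ⟨0, by omega⟩ := congrArg β (Fin.ext (by simpa using h0))
          omega
        · obtain ⟨k, hk⟩ := he
          have hkg : k - 1 < g := by have := j.isLt; omega
          set lf : Fin g := ⟨k - 1, hkg⟩ with hlf
          have hval : (lf : ℕ) = k - 1 := rfl
          refine Or.inr ⟨lf, ?_, ?_⟩
          · have h1 : β ⟨2 * (lf : ℕ) + 1, by have := lf.isLt; omega⟩ < β j :=
              hβ (Fin.lt_def.mpr (by simp [hval]; omega))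
            omega
          · have h2 : β j = β ⟨2 * (lf : ℕ) + 2, by have := lf.isLt; omega⟩ :=
              congrArg β (Fin.ext (by simp [hval]; omega))
            omega
    have hex : ∃ i, β i = β j := ⟨j, rfl⟩
    rw [hB, ← Nat.not_odd_iff_even, ← hA]
    simp [Xor', Xor, hex]
  · have hne : ∀ i, β i ≠ x := by push_neg at h; exact h
    have hx' : Xor' (x ∈ XiBlocks g β) (∃ i, β i = x) ↔ x ∈ XiBlocks g β := by
      simp [Xor', Xor, h]
    rw [hx', hmem, hmem]
    by_cases hx0 : x < β ⟨0, by omega⟩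
    · constructor
      · intro _; exact Or.inl hx0
      · intro _; left; omega
    · have h0 : β ⟨0, by omega⟩ < x := lt_of_le_of_ne (not_lt.mp hx0) (hne _)
      constructor
      · rintro (h0' | ⟨l, h1, h2⟩)
        · omega
        · have := hne ⟨2 * (l : ℕ) + 2, by have := l.isLt; omega⟩
          exact Or.inr ⟨l, by omega, by omega⟩
      · rintro (h0' | ⟨l, h1, h2⟩)
        · omega
        · have := hne ⟨2 * (l : ℕ) + 1, by have := l.isLt; omega⟩
          exact Or.inr ⟨l, by omega, by omega⟩

/-- Applying the flips at the block coordinates `β₀,...,β_{2g}` (in any order) to a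
Maya diagram `M` of genus `g` yields `M + 1`; in particular `M` is `(2g+1,1)`-cyclic. -/
theorem flips_at_block_coordinates (M : Set ℤ) (g : ℕ)
    (β : Fin (2 * g + 1) → ℤ) (hβ : StrictMono β) (hM : M = XiBlocks g β) :
    (∀ l : List ℤ, l.Nodup → (↑l.toFinset : Set ℤ) = Set.range β →
        flipList l M = shiftSet M 1)
    ∧ MayaCyclic M (2 * g + 1) 1 := by
  subst hM
  have key : ∀ l : List ℤ, l.Nodup → (∀ x, x ∈ l ↔ ∃ i, β i = x) →
      flipList l (XiBlocks g β) = shiftSet (XiBlocks g β) 1 := by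
    intro l hl hmeml
    ext x
    have hsh : x ∈ shiftSet (XiBlocks g β) 1 ↔ x - 1 ∈ XiBlocks g β := by
      constructor
      · rintro ⟨m, hm, rfl⟩; simpa using hm
      · intro hm; exact ⟨x - 1, hm, by ring⟩
    rw [mem_flipList hl, hsh, hmeml x]
    exact (xi_shift hβ x).symm
  constructor
  · intro l hl hset
    refine key l hl fun x => ?_
    have h1 : x ∈ (↑l.toFinset : Set ℤ) ↔ x ∈ Set.range β := by rw [hset]
    simpa [Set.mem_range] using h1
  · refine ⟨(List.finRange (2 * g + 1)).map β, by simp, ?_⟩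
    refine key _ ((List.nodup_finRange _).map hβ.injective) fun x => ?_
    simp [List.mem_map]
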